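/- Let A be a real m×n matrix admitting a singular value decomposition A = U Σ Vᵀ, where U is an m×m orthogonal matrix, V is an n×n orthogonal matrix, and Σ is the m×n rectangular diagonal matrix with diagonal entries σ₁ ≥ σ₂ ≥ ⋯ ≥ σ_min(m,n) ≥ 0. For a given integer K with 1 ≤ K ≤ min(m,n), the truncated matrix X* = Σ_{k=1}^{K} σ_k u_k v_kᵀ (where u_k, v_k are the k-th columns of U and V) satisfies rank(X*) ≤ K and ‖A − X*‖_F ≤ ‖A − X‖_F for every m×n real matrix X with rank(X) ≤ K. -/

import Mathlib

open Matrix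

/-- Frobenius norm of a real matrix. -/
noncomputable def frob {m n : ℕ} (M : Matrix (Fin m) (Fin n) ℝ) : ℝ :=
  Real.sqrt (∑ i, ∑ j, (M i j) ^ 2)

section EYMauxSection
open Matrix Finset RealInnerProductSpace
noncomputable section
namespace EYMaux


def sq2 {m n : ℕ} (M : Matrix (Fin m) (Fin n) ℝ) : ℝ := ∑ i, ∑ j, (M i j) ^ 2

lemma sq2_eq_trace {m n : ℕ} (M : Matrix (Fin m) (Fin n) ℝ) :
    sq2 M = Matrix.trace (Mᵀ * M) := by
  unfold sq2 Matrix.trace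
  rw [Finset.sum_comm]
  simp [Matrix.diag, Matrix.mul_apply, sq]

lemma sq2_conj {m n : ℕ} (M : Matrix (Fin m) (Fin n) ℝ)
    (U : Matrix (Fin m) (Fin m) ℝ) (V : Matrix (Fin n) (Fin n) ℝ)
    (hU : Uᵀ * U = 1) (hV : Vᵀ * V = 1) :
    sq2 (U * M * Vᵀ) = sq2 M := by
  rw [sq2_eq_trace, sq2_eq_trace]
  have h1 : (U * M * Vᵀ)ᵀ * (U * M * Vᵀ) = V * (Mᵀ * M) * Vᵀ := by
    calc (U * M * Vᵀ)ᵀ * (U * M * Vᵀ) = V * (Mᵀ * (Uᵀ * U) * M) * Vᵀ := by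
          simp only [Matrix.transpose_mul, Matrix.transpose_transpose, Matrix.mul_assoc]
      _ = V * (Mᵀ * M) * Vᵀ := by rw [hU, Matrix.mul_one]
  rw [h1, Matrix.trace_mul_cycle, ← Matrix.mul_assoc, hV, Matrix.one_mul]


lemma sum_cut (c b : ℕ → ℝ) (K N : ℕ) (hKN : K ≤ N) (hK1 : 1 ≤ K)
    (hc : ∀ i j, i ≤ j → j < N → c j ≤ c i) (hc0 : ∀ i, i < N → 0 ≤ c i)
    (hb0 : ∀ i, 0 ≤ b i) (hb1 : ∀ i, i < N → b i ≤ 1)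
    (hbs : ∑ i ∈ range N, b i ≤ (K : ℝ)) :
    ∑ i ∈ range N, c i * b i ≤ ∑ i ∈ range K, c i := by
  set t := c (K - 1) with ht
  have hKN' : K - 1 < N := by omega
  have ht0 : 0 ≤ t := hc0 _ hKN'
  have key1 : ∑ i ∈ range K, c i * b i ≤
      (∑ i ∈ range K, c i) - t * ((K : ℝ) - ∑ i ∈ range K, b i) := by
    have hstep : ∀ i ∈ range K, c i * b i ≤ c i - t * (1 - b i) := by
      intro i hi
      simp only [mem_range] at hi
      have h1 : t ≤ c i := hc i (K - 1) (by omega) hKN'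
      have h2 : b i ≤ 1 := hb1 i (by omega)
      nlinarith [hb0 i]
    calc ∑ i ∈ range K, c i * b i ≤ ∑ i ∈ range K, (c i - t * (1 - b i)) :=
          Finset.sum_le_sum hstep
      _ = (∑ i ∈ range K, c i) - t * ((K : ℝ) - ∑ i ∈ range K, b i) := by
          rw [Finset.sum_sub_distrib, ← Finset.mul_sum, Finset.sum_sub_distrib,
            Finset.sum_const, Finset.card_range, nsmul_eq_mul, mul_one]
  have key2 : ∑ i ∈ Ico K N, c i * b i ≤ t * ∑ i ∈ Ico K N, b i := by
    rw [Finset.mul_sum]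
    refine Finset.sum_le_sum fun i hi => ?_
    simp only [mem_Ico] at hi
    have h1 : c i ≤ t := hc (K - 1) i (by omega) hi.2
    exact mul_le_mul_of_nonneg_right h1 (hb0 i) |>.trans_eq rfl
  have hsplit1 : ∑ i ∈ range N, c i * b i
      = ∑ i ∈ range K, c i * b i + ∑ i ∈ Ico K N, c i * b i :=
    (Finset.sum_range_add_sum_Ico _ hKN).symm
  have hsplit2 : ∑ i ∈ range N, b i = ∑ i ∈ range K, b i + ∑ i ∈ Ico K N, b i :=
    (Finset.sum_range_add_sum_Ico _ hKN).symm
  have hfin : t * (∑ i ∈ range K, b i + ∑ i ∈ Ico K N, b i - (K : ℝ)) ≤ 0 := by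
    apply mul_nonpos_of_nonneg_of_nonpos ht0
    rw [← hsplit2]; linarith
  nlinarith [key1, key2, hfin]


lemma proj_facts {m : ℕ} (W : Submodule ℝ (EuclideanSpace ℝ (Fin m))) :
    ∃ P : EuclideanSpace ℝ (Fin m) → EuclideanSpace ℝ (Fin m),
      (∀ (a : ℝ) x, P (a • x) = a • P x) ∧
      (∀ x y, y ∈ W → ⟪x, x⟫ - ⟪P x, P x⟫ ≤ ⟪x - y, x - y⟫) ∧
      (∀ x, 0 ≤ ⟪P x, P x⟫) ∧
      (∀ x, ⟪P x, P x⟫ ≤ ⟪x, x⟫) ∧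
      (∑ i : Fin m, ⟪P (EuclideanSpace.single i 1), P (EuclideanSpace.single i 1)⟫
        = (Module.finrank ℝ W : ℝ)) := by
  classical
  set r := Module.finrank ℝ W with hr
  let wb := stdOrthonormalBasis ℝ W
  let u : Fin r → EuclideanSpace ℝ (Fin m) := fun i => (wb i : EuclideanSpace ℝ (Fin m))
  have hu : Orthonormal ℝ u := by
    rw [orthonormal_iff_ite]
    intro i j
    have h := orthonormal_iff_ite.mp wb.orthonormal i j
    rwa [Submodule.coe_inner] at h
  have hinner_ite : ∀ i j, ⟪u i, u j⟫ = if i = j then (1:ℝ) else 0 :=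
    orthonormal_iff_ite.mp hu
  set P : EuclideanSpace ℝ (Fin m) → EuclideanSpace ℝ (Fin m) :=
    fun x => ∑ i, ⟪u i, x⟫ • u i with hP
  have hPinner : ∀ x i, ⟪u i, P x⟫ = ⟪u i, x⟫ := by
    intro x i
    rw [hP]
    simp only [inner_sum, real_inner_smul_right, hinner_ite, mul_ite, mul_one, mul_zero]
    simp
  have hPsmul : ∀ (a : ℝ) x, P (a • x) = a • P x := by
    intro a x
    rw [hP]
    simp only [real_inner_smul_right, Finset.smul_sum, smul_smul]
  have hPmem : ∀ x, P x ∈ W := by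
    intro x
    exact Submodule.sum_mem _ fun i _ => Submodule.smul_mem _ _ (SetLike.coe_mem (wb i))
  have hPorth1 : ∀ x i, ⟪x - P x, u i⟫ = 0 := by
    intro x i
    rw [real_inner_comm, inner_sub_right, hPinner, sub_self]
  have hWspan : W ≤ Submodule.span ℝ (Set.range u) := by
    intro z hz
    have h1 : (⟨z, hz⟩ : W) ∈ (⊤ : Submodule ℝ W) := trivial
    rw [← wb.toBasis.span_eq] at h1
    have h2 := Submodule.mem_map_of_mem (f := W.subtype) h1
    rw [Submodule.map_span] at h2
    have h3 : W.subtype '' Set.range (wb.toBasis) = Set.range u := by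
      ext y
      simp [u, Set.range_comp, OrthonormalBasis.coe_toBasis, Set.mem_image]
      exact Iff.rfl
    rw [h3] at h2
    exact h2
  have hPorth : ∀ x z, z ∈ W → ⟪x - P x, z⟫ = 0 := by
    intro x z hz
    have h : ∀ y, y ∈ Submodule.span ℝ (Set.range u) → ⟪x - P x, y⟫ = 0 := by
      intro y hy
      induction hy using Submodule.span_induction with
      | mem w hw => obtain ⟨i, rfl⟩ := hw; exact hPorth1 x i
      | zero => exact inner_zero_right _
      | add w v _ _ hw hv => rw [inner_add_right, hw, hv, add_zero]
      | smul a w _ hw => rw [real_inner_smul_right, hw, mul_zero]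
    exact h z (hWspan hz)
  have hx_decomp : ∀ x, ⟪x, x⟫ = ⟪P x, P x⟫ + ⟪x - P x, x - P x⟫ := by
    intro x
    have h2 := real_inner_add_add_self (x - P x) (P x)
    have h3 : ⟪x - P x, P x⟫ = 0 := hPorth x (P x) (hPmem x)
    have h4 : x - P x + P x = x := by abel
    rw [h4, h3] at h2
    linarith
  refine ⟨P, hPsmul, ?_, fun x => real_inner_self_nonneg, ?_, ?_⟩
  · intro x y hy
    have h2 := real_inner_add_add_self (x - P x) (P x - y)
    have h3 : ⟪x - P x, P x - y⟫ = 0 := hPorth x _ (W.sub_mem (hPmem x) hy)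
    have h4 : (0:ℝ) ≤ ⟪P x - y, P x - y⟫ := real_inner_self_nonneg
    have h5 : x - P x + (P x - y) = x - y := by abel
    rw [h5, h3] at h2
    have := hx_decomp x
    linarith
  · intro x
    have := hx_decomp x
    have h4 : (0:ℝ) ≤ ⟪x - P x, x - P x⟫ := real_inner_self_nonneg
    linarith
  · -- trace computation
    have hPval : ∀ x, ⟪P x, P x⟫ = ∑ i, ⟪u i, x⟫ ^ 2 := by
      intro x
      have hPx : P x = ∑ i, ⟪u i, x⟫ • u i := rfl
      nth_rewrite 1 [hPx]
      rw [sum_inner]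
      simp only [real_inner_smul_left]
      exact Finset.sum_congr rfl fun i _ => by rw [hPinner, sq]
    have hsingle : ∀ (t : Fin r) (i : Fin m), ⟪u t, EuclideanSpace.single i 1⟫ = u t i := by
      intro t i
      rw [real_inner_comm]
      simp [EuclideanSpace.inner_single_left]
    calc ∑ i : Fin m, ⟪P (EuclideanSpace.single i 1), P (EuclideanSpace.single i 1)⟫
        = ∑ i : Fin m, ∑ t : Fin r, ⟪u t, EuclideanSpace.single i 1⟫ ^ 2 := by
          exact Finset.sum_congr rfl fun i _ => hPval _
      _ = ∑ t : Fin r, ∑ i : Fin m, (u t i) ^ 2 := by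
          rw [Finset.sum_comm]
          exact Finset.sum_congr rfl fun t _ => Finset.sum_congr rfl fun i _ => by
            rw [hsingle]
      _ = ∑ t : Fin r, (1:ℝ) := by
          refine Finset.sum_congr rfl fun t _ => ?_
          have h1 := hinner_ite t t
          rw [if_pos rfl, PiLp.inner_apply] at h1
          simpa [sq, RCLike.inner_apply, conj_trivial] using h1
      _ = (r : ℝ) := by simp
lemma core {m n : ℕ} (σ : ℕ → ℝ) (K : ℕ)
    (S : Matrix (Fin m) (Fin n) ℝ)
    (hS : ∀ (i : Fin m) (j : Fin n), S i j = if (i : ℕ) = (j : ℕ) then σ (i : ℕ) else 0)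
    (hσmono : ∀ i j : ℕ, i ≤ j → j < min m n → σ j ≤ σ i)
    (hσnonneg : ∀ i : ℕ, i < min m n → 0 ≤ σ i)
    (hK1 : 1 ≤ K) (hK : K ≤ min m n)
    (Y : Matrix (Fin m) (Fin n) ℝ) (hY : Y.rank ≤ K) :
    ∑ k ∈ Ico K (min m n), σ k ^ 2 ≤ sq2 (S - Y) := by
  classical
  let e : (Fin m → ℝ) ≃ₗ[ℝ] EuclideanSpace ℝ (Fin m) :=
    (WithLp.linearEquiv 2 ℝ (Fin m → ℝ)).symm
  set W : Submodule ℝ (EuclideanSpace ℝ (Fin m)) :=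
    (Submodule.span ℝ (Set.range Yᵀ)).map (e : (Fin m → ℝ) →ₗ[ℝ] EuclideanSpace ℝ (Fin m))
    with hW
  have hWrank : Module.finrank ℝ W ≤ K := by
    rw [hW, LinearEquiv.finrank_map_eq]
    exact (Matrix.rank_eq_finrank_span_cols Y).symm.trans_le hY
  obtain ⟨P, hPsmul, hsub, hPnn, hPle, htrace⟩ := proj_facts W
  let sc : Fin n → EuclideanSpace ℝ (Fin m) := fun j => e (Sᵀ j)
  let yc : Fin n → EuclideanSpace ℝ (Fin m) := fun j => e (Yᵀ j)
  have hcolW : ∀ j : Fin n, yc j ∈ W := fun j =>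
    Submodule.mem_map_of_mem (Submodule.subset_span ⟨j, rfl⟩)
  have hinself : ∀ z : EuclideanSpace ℝ (Fin m), ⟪z, z⟫ = ∑ i, (z i)^2 := by
    intro z; rw [PiLp.inner_apply]; simp [RCLike.inner_apply, sq]
  have hsq2 : sq2 (S - Y) = ∑ j : Fin n, ⟪sc j - yc j, sc j - yc j⟫ := by
    unfold sq2
    rw [Finset.sum_comm]
    refine Finset.sum_congr rfl fun j _ => ?_
    rw [hinself]
    refine Finset.sum_congr rfl fun i _ => ?_
    rfl
  set β : Fin m → ℝ :=
    fun i => ⟪P (EuclideanSpace.single i 1), P (EuclideanSpace.single i 1)⟫ with hβ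
  have hsingleself : ∀ i : Fin m,
      ⟪EuclideanSpace.single i (1:ℝ), EuclideanSpace.single i (1:ℝ)⟫ = 1 := by
    intro i
    rw [hinself]
    simp [EuclideanSpace.single_apply, sq]
  have hβ0 : ∀ i, 0 ≤ β i := fun i => hPnn _
  have hβ1 : ∀ i, β i ≤ 1 := by
    intro i
    have h := hPle (EuclideanSpace.single i (1:ℝ))
    rw [hsingleself i] at h
    exact h
  set B : ℕ → ℝ := fun k => if h : k < m then β ⟨k, h⟩ else 0 with hB
  have hcol : ∀ j : Fin n,
      (if (j:ℕ) < min m n then σ (j:ℕ)^2 * (1 - B (j:ℕ)) else 0)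
        ≤ ⟪sc j - yc j, sc j - yc j⟫ := by
    intro j
    by_cases h : (j:ℕ) < m
    · have hjmin : (j:ℕ) < min m n := lt_min h j.isLt
      have hscj : sc j = (σ (j:ℕ)) • EuclideanSpace.single (⟨(j:ℕ), h⟩ : Fin m) (1:ℝ) := by
        ext i
        have hr : ((σ (j:ℕ)) • EuclideanSpace.single (⟨(j:ℕ), h⟩ : Fin m) (1:ℝ)) i
            = σ (j:ℕ) * (if (i:ℕ) = (j:ℕ) then 1 else 0) := by
          simp [EuclideanSpace.single_apply, Fin.ext_iff]
        rw [hr]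
        show S i j = _
        rw [hS]
        by_cases hij : (i:ℕ) = (j:ℕ)
        · simp [hij]
        · simp [hij]
      have hval : ⟪sc j, sc j⟫ = σ (j:ℕ)^2 := by
        rw [hscj, real_inner_smul_left, real_inner_smul_right, hsingleself]
        ring
      have hPval : ⟪P (sc j), P (sc j)⟫ = σ (j:ℕ)^2 * β ⟨(j:ℕ), h⟩ := by
        rw [hscj, hPsmul, real_inner_smul_left, real_inner_smul_right]
        rw [hβ]
        ring
      have hb := hsub (sc j) (yc j) (hcolW j)
      rw [if_pos hjmin]
      have hBj : B (j:ℕ) = β ⟨(j:ℕ), h⟩ := by rw [hB]; simp [h]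
      rw [hBj]
      calc σ (j:ℕ)^2 * (1 - β ⟨(j:ℕ), h⟩)
          = ⟪sc j, sc j⟫ - ⟪P (sc j), P (sc j)⟫ := by rw [hval, hPval]; ring
        _ ≤ _ := hb
    · have hjmin : ¬ ((j:ℕ) < min m n) := by omega
      rw [if_neg hjmin]
      exact real_inner_self_nonneg
  have hsum1 : ∑ j : Fin n, (if (j:ℕ) < min m n then σ (j:ℕ)^2 * (1 - B (j:ℕ)) else 0)
      ≤ sq2 (S - Y) := by
    rw [hsq2]; exact Finset.sum_le_sum fun j _ => hcol j
  have hsum2 : ∑ j : Fin n, (if (j:ℕ) < min m n then σ (j:ℕ)^2 * (1 - B (j:ℕ)) else 0)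
      = ∑ k ∈ range (min m n), σ k^2 * (1 - B k) := by
    rw [Fin.sum_univ_eq_sum_range (fun k => if k < min m n then σ k^2 * (1 - B k) else 0) n]
    rw [← Finset.sum_subset (Finset.range_subset_range.mpr (min_le_right m n))
      (fun x _ hx => by rw [if_neg (by simpa using hx)])]
    exact Finset.sum_congr rfl fun k hk => if_pos (mem_range.mp hk)
  have hBsum : ∑ k ∈ range (min m n), B k ≤ (K:ℝ) := by
    have h1 : ∑ k ∈ range (min m n), B k ≤ ∑ k ∈ range m, B k := by
      refine Finset.sum_le_sum_of_subset_of_nonneg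
        (Finset.range_subset_range.mpr (min_le_left m n)) (fun k _ _ => ?_)
      rw [hB]; dsimp only; split
      · exact hβ0 _
      · exact le_refl 0
    have h2 : ∑ k ∈ range m, B k = ∑ i : Fin m, β i := by
      rw [← Fin.sum_univ_eq_sum_range (fun k => B k) m]
      refine Finset.sum_congr rfl fun i _ => ?_
      rw [hB]; simp [i.isLt]
    rw [h2] at h1
    rw [hβ] at h1
    calc ∑ k ∈ range (min m n), B k ≤ _ := h1
      _ = (Module.finrank ℝ W : ℝ) := htrace
      _ ≤ (K : ℝ) := Nat.cast_le.mpr hWrank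
  have hcut : ∑ k ∈ range (min m n), σ k ^ 2 * B k ≤ ∑ k ∈ range K, σ k ^ 2 := by
    refine sum_cut (fun k => σ k ^ 2) B K (min m n) hK hK1 ?_ ?_ ?_ ?_ hBsum
    · intro i j hij hj
      exact pow_le_pow_left₀ (hσnonneg j hj) (hσmono i j hij hj) 2
    · intro i _; exact sq_nonneg _
    · intro i
      rw [hB]; dsimp only; split
      · exact hβ0 _
      · exact le_refl 0
    · intro i hi
      rw [hB]
      have him : i < m := lt_of_lt_of_le hi (min_le_left m n)
      simp only [him, dif_pos]
      exact hβ1 _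
  have hsplit : ∑ k ∈ range K, σ k ^ 2 + ∑ k ∈ Ico K (min m n), σ k ^ 2
      = ∑ k ∈ range (min m n), σ k ^ 2 := Finset.sum_range_add_sum_Ico _ hK
  have hexpand : ∑ k ∈ range (min m n), σ k^2 * (1 - B k)
      = ∑ k ∈ range (min m n), σ k ^ 2 - ∑ k ∈ range (min m n), σ k ^ 2 * B k := by
    rw [← Finset.sum_sub_distrib]
    exact Finset.sum_congr rfl fun k _ => by ring
  rw [hsum2, hexpand] at hsum1
  linarith
end EYMaux
end
end EYMauxSection

open Matrix

/-- Eckart–Young–Mirsky theorem (existence part): the truncated SVD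
`X* = ∑_{k<K} σ_k u_k v_kᵀ` has rank at most `K` and is a best rank-`K`
approximation of `A` in the Frobenius norm. -/
theorem eckart_young_mirsky_existence {m n : ℕ}
    (A : Matrix (Fin m) (Fin n) ℝ)
    (U : Matrix (Fin m) (Fin m) ℝ) (V : Matrix (Fin n) (Fin n) ℝ)
    (S : Matrix (Fin m) (Fin n) ℝ) (σ : ℕ → ℝ) (K : ℕ)
    (hU : Uᵀ * U = 1) (hV : Vᵀ * V = 1)
    (hA : A = U * S * Vᵀ)
    (hS : ∀ (i : Fin m) (j : Fin n), S i j = if (i : ℕ) = (j : ℕ) then σ (i : ℕ) else 0)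
    (hσmono : ∀ i j : ℕ, i ≤ j → j < min m n → σ j ≤ σ i)
    (hσnonneg : ∀ i : ℕ, i < min m n → 0 ≤ σ i)
    (hK1 : 1 ≤ K) (hK : K ≤ min m n)
    (Xstar : Matrix (Fin m) (Fin n) ℝ)
    (hXstar : Xstar = ∑ k : Fin K,
      σ (k : ℕ) •
        Matrix.vecMulVec
          (fun i => U i ⟨(k : ℕ), lt_of_lt_of_le k.2 (hK.trans (min_le_left m n))⟩)
          (fun j => V j ⟨(k : ℕ), lt_of_lt_of_le k.2 (hK.trans (min_le_right m n))⟩)) :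
    Xstar.rank ≤ K ∧
      ∀ X : Matrix (Fin m) (Fin n) ℝ, X.rank ≤ K →
        frob (A - Xstar) ≤ frob (A - X) := by
  classical
  have hUU : U * Uᵀ = 1 := mul_eq_one_comm.mp hU
  have hVV : V * Vᵀ = 1 := mul_eq_one_comm.mp hV
  have hKm : K ≤ m := hK.trans (min_le_left m n)
  have hKn : K ≤ n := hK.trans (min_le_right m n)
  set D : Matrix (Fin m) (Fin n) ℝ :=
    Matrix.of (fun i j => if (i:ℕ) = (j:ℕ) ∧ (i:ℕ) < K then σ (i:ℕ) else 0) with hD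
  -- X* = U * D * Vᵀ
  set f : Fin m → Fin n → ℕ → ℝ := fun i j t =>
    if h : t < K then σ t * (U i ⟨t, lt_of_lt_of_le h hKm⟩ * V j ⟨t, lt_of_lt_of_le h hKn⟩)
    else 0 with hf
  have hXD : Xstar = U * D * Vᵀ := by
    rw [hXstar]
    ext i j
    rw [Matrix.sum_apply]
    have hLHS : ∀ k : Fin K, (σ (k:ℕ) • Matrix.vecMulVec
        (fun i' => U i' ⟨(k:ℕ), lt_of_lt_of_le k.2 (hK.trans (min_le_left m n))⟩)
        (fun j' => V j' ⟨(k:ℕ), lt_of_lt_of_le k.2 (hK.trans (min_le_right m n))⟩)) i j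
        = f i j (k:ℕ) := by
      intro k
      rw [hf]
      simp only [Matrix.smul_apply, Matrix.vecMulVec_apply, smul_eq_mul, dif_pos k.2]
    rw [Finset.sum_congr rfl fun k _ => hLHS k]
    have hrhs : (U * D * Vᵀ) i j
        = ∑ q : Fin n, (∑ p : Fin m, U i p * D p q) * V j q := by
      simp [Matrix.mul_apply, Finset.sum_mul, Matrix.transpose_apply]
    rw [hrhs]
    have hinner : ∀ q : Fin n, (∑ p : Fin m, U i p * D p q) * V j q = f i j (q:ℕ) := by
      intro q
      by_cases h : (q:ℕ) < K
      · have h0 : ∀ p ∈ Finset.univ, p ≠ (⟨(q:ℕ), lt_of_lt_of_le h hKm⟩ : Fin m) →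
            U i p * D p q = 0 := by
          intro p _ hp
          have hpq : ¬((p:ℕ) = (q:ℕ) ∧ (p:ℕ) < K) := by
            rintro ⟨h1, _⟩
            exact hp (Fin.ext h1)
          rw [hD]; simp [hpq]
        have hDq : D ⟨(q:ℕ), lt_of_lt_of_le h hKm⟩ q = σ (q:ℕ) := by
          rw [hD]; simp [h]
        have hsum : (∑ p : Fin m, U i p * D p q)
            = U i ⟨(q:ℕ), lt_of_lt_of_le h hKm⟩ * σ (q:ℕ) := by
          rw [Finset.sum_eq_single_of_mem _ (Finset.mem_univ _) h0, hDq]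
        rw [hsum, hf]
        simp only [dif_pos h]
        have : V j ⟨(q:ℕ), lt_of_lt_of_le h hKn⟩ = V j q := rfl
        rw [this]; ring
      · have hsum : (∑ p : Fin m, U i p * D p q) = 0 := by
          apply Finset.sum_eq_zero
          intro p _
          have hpq : ¬((p:ℕ) = (q:ℕ) ∧ (p:ℕ) < K) := by rintro ⟨h1, h2⟩; omega
          rw [hD]; simp [hpq]
        rw [hsum, hf]
        simp [h]
    rw [Finset.sum_congr rfl fun q _ => hinner q]
    rw [Fin.sum_univ_eq_sum_range (f i j) K, Fin.sum_univ_eq_sum_range (f i j) n]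
    refine Finset.sum_subset (Finset.range_subset_range.mpr hKn) fun t _ ht => ?_
    have ht' : ¬ t < K := by simpa using ht
    simp only [hf]
    rw [dif_neg ht']
  -- rank part
  set E1 : Matrix (Fin m) (Fin K) ℝ :=
    Matrix.of (fun i k => if (i:ℕ) = (k:ℕ) then σ (i:ℕ) else 0) with hE1
  set F1 : Matrix (Fin K) (Fin n) ℝ :=
    Matrix.of (fun k j => if (k:ℕ) = (j:ℕ) then 1 else 0) with hF1
  have hDEF : D = E1 * F1 := by
    ext i j
    rw [Matrix.mul_apply, hD, Matrix.of_apply]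
    by_cases h : (i:ℕ) = (j:ℕ) ∧ (i:ℕ) < K
    · obtain ⟨h1, h2⟩ := h
      have h0 : ∀ k ∈ Finset.univ, k ≠ (⟨(i:ℕ), h2⟩ : Fin K) → E1 i k * F1 k j = 0 := by
        intro k _ hk
        have : (i:ℕ) ≠ (k:ℕ) := fun hik => hk (Fin.ext hik.symm)
        rw [hE1]; simp [this]
      have e1 : E1 i ⟨(i:ℕ), h2⟩ = σ (i:ℕ) := by rw [hE1]; simp
      have f1 : F1 ⟨(i:ℕ), h2⟩ j = 1 := by rw [hF1]; simp [h1]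
      rw [Finset.sum_eq_single_of_mem _ (Finset.mem_univ _) h0, e1, f1,
        if_pos ⟨h1, h2⟩, mul_one]
    · rw [if_neg h]
      symm
      apply Finset.sum_eq_zero
      intro k _
      by_cases h1 : (i:ℕ) = (k:ℕ)
      · have h2 : (k:ℕ) ≠ (j:ℕ) := by
          intro h3
          exact h ⟨h1.trans h3, h1 ▸ k.isLt⟩
        rw [hF1]; simp [h2]
      · rw [hE1]; simp [h1]
  have hrank : Xstar.rank ≤ K := by
    rw [hXD, hDEF]
    calc (U * (E1 * F1) * Vᵀ).rank ≤ (U * (E1 * F1)).rank := Matrix.rank_mul_le_left _ _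
      _ ≤ (E1 * F1).rank := Matrix.rank_mul_le_right _ _
      _ ≤ E1.rank := Matrix.rank_mul_le_left _ _
      _ ≤ Fintype.card (Fin K) := E1.rank_le_card_width
      _ = K := Fintype.card_fin K
  -- sq2 of optimal residual
  have hAX : A - Xstar = U * (S - D) * Vᵀ := by
    rw [hA, hXD, ← Matrix.sub_mul, ← Matrix.mul_sub]
  have hSD : EYMaux.sq2 (S - D) = ∑ k ∈ Finset.Ico K (min m n), σ k ^ 2 := by
    unfold EYMaux.sq2
    have hentry : ∀ (i : Fin m) (j : Fin n), ((S - D) i j)^2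
        = if (i:ℕ) = (j:ℕ) ∧ K ≤ (i:ℕ) then σ (i:ℕ)^2 else 0 := by
      intro i j
      rw [Matrix.sub_apply, hS, hD, Matrix.of_apply]
      by_cases h1 : (i:ℕ) = (j:ℕ)
      · by_cases h2 : (i:ℕ) < K
        · rw [if_pos h1, if_pos ⟨h1, h2⟩, if_neg (fun hc => absurd hc.2 (by omega)),
            sub_self]
          ring
        · rw [if_pos h1, if_neg (fun hc => h2 hc.2), if_pos ⟨h1, Nat.le_of_not_lt h2⟩,
            sub_zero]
      · rw [if_neg h1, if_neg (fun hc => h1 hc.1), if_neg (fun hc => h1 hc.1), sub_self]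
        ring
    calc ∑ i, ∑ j, ((S - D) i j)^2
        = ∑ i : Fin m, (if (i:ℕ) < n ∧ K ≤ (i:ℕ) then σ (i:ℕ)^2 else 0) := by
          refine Finset.sum_congr rfl fun i _ => ?_
          rw [Finset.sum_congr rfl fun j _ => hentry i j]
          by_cases h2 : K ≤ (i:ℕ)
          · by_cases h3 : (i:ℕ) < n
            · rw [if_pos ⟨h3, h2⟩]
              rw [Finset.sum_eq_single (⟨(i:ℕ), h3⟩ : Fin n)]
              · simp [h2]
              · intro j _ hj
                have : (i:ℕ) ≠ (j:ℕ) := fun hij => hj (Fin.ext hij.symm)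
                simp [this]
              · intro habs; exact absurd (Finset.mem_univ _) habs
            · rw [if_neg (by tauto)]
              apply Finset.sum_eq_zero
              intro j _
              rw [if_neg]
              rintro ⟨hj, _⟩
              exact h3 (hj ▸ j.isLt)
          · rw [if_neg (by tauto)]
            apply Finset.sum_eq_zero
            intro j _
            rw [if_neg]
            rintro ⟨_, hj⟩
            exact h2 hj
      _ = ∑ t ∈ Finset.range m, (if t < n ∧ K ≤ t then σ t^2 else 0) :=
          Fin.sum_univ_eq_sum_range (fun t => if t < n ∧ K ≤ t then σ t ^ 2 else 0) m
      _ = ∑ t ∈ Finset.Ico K (min m n), σ t ^ 2 := by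
          rw [← Finset.sum_filter]
          congr 1
          ext t
          simp only [Finset.mem_filter, Finset.mem_range, Finset.mem_Ico]
          omega
  refine ⟨hrank, ?_⟩
  intro X hX
  have hfrob : ∀ M : Matrix (Fin m) (Fin n) ℝ, frob M = Real.sqrt (EYMaux.sq2 M) :=
    fun M => rfl
  rw [hfrob, hfrob]
  apply Real.sqrt_le_sqrt
  set Y := Uᵀ * X * V with hY
  have hrankY : Y.rank ≤ K :=
    le_trans (le_trans (Matrix.rank_mul_le_left _ _) (Matrix.rank_mul_le_right _ _)) hX
  have hAX2 : A - X = U * (S - Y) * Vᵀ := by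
    rw [Matrix.mul_sub, Matrix.sub_mul, ← hA]
    congr 1
    rw [hY]
    symm
    calc U * (Uᵀ * X * V) * Vᵀ = U * Uᵀ * X * (V * Vᵀ) := by
          simp only [Matrix.mul_assoc]
      _ = X := by rw [hUU, hVV, Matrix.one_mul, Matrix.mul_one]
  calc EYMaux.sq2 (A - Xstar) = EYMaux.sq2 (S - D) := by
        rw [hAX, EYMaux.sq2_conj _ _ _ hU hV]
    _ = ∑ k ∈ Finset.Ico K (min m n), σ k ^ 2 := hSD
    _ ≤ EYMaux.sq2 (S - Y) := EYMaux.core σ K S hS hσmono hσnonneg hK1 hK Y hrankY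
    _ = EYMaux.sq2 (A - X) := by rw [hAX2, EYMaux.sq2_conj _ _ _ hU hV]
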